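/- Let s = (J−1)/2 and t = (K−1)/2, let h'(i,j) = h(J−1−i, K−1−j) be the coordinate-reversed PSF with extended form h'_e, and let Ĥ' be the two-dimensional DFT of h'_e. Suppose g : ZMod M × ZMod N → ℂ satisfies Ĝ(u,v) = F̂(u,v) · Ĥ'(u,v) · exp(2πi·v·t/N) · exp(2πi·u·s/M) for every (u,v), where F̂, Ĝ are the two-dimensional DFTs of f, g. Then for all (m,n), g(m,n) = Σ_{i=0}^{J−1} Σ_{j=0}^{K−1} h(i,j) · f(m − s + i, n − t + j) (indices modulo M and N respectively); that is, the spatial-domain convolution corresponding to this modified frequency-domain formula satisfies the symmetric property and its PSF is the original h. -/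

import Mathlib

/-- The two-dimensional discrete Fourier transform of `z : ZMod M × ZMod N → ℂ`:
`Ẑ(u,v) = Σ_{m=0}^{M−1} Σ_{n=0}^{N−1} z(m,n) · exp(−2πi·u·m/M) · exp(−2πi·v·n/N)`. -/
noncomputable def dft2 {M N : ℕ} [NeZero M] [NeZero N]
    (z : ZMod M × ZMod N → ℂ) (u : ZMod M) (v : ZMod N) : ℂ :=
  ∑ m : ZMod M, ∑ n : ZMod N,
    z (m, n) * Complex.exp (-2 * Real.pi * Complex.I * (u.val : ℂ) * (m.val : ℂ) / (M : ℂ))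
      * Complex.exp (-2 * Real.pi * Complex.I * (v.val : ℂ) * (n.val : ℂ) / (N : ℂ))

open Finset Complex

noncomputable def eps (M : ℕ) (a : ℤ) : ℂ := Complex.exp (2 * Real.pi * Complex.I * a / M)

lemma eps_add (M : ℕ) (a b : ℤ) : eps M (a + b) = eps M a * eps M b := by
  rw [eps, eps, eps, ← Complex.exp_add]; congr 1; push_cast; ring

lemma eps_mul_self (M : ℕ) [NeZero M] (k : ℤ) : eps M (M * k) = 1 := by
  rw [eps]
  have hM : (M : ℂ) ≠ 0 := Nat.cast_ne_zero.mpr (NeZero.ne M)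
  have : 2 * (Real.pi : ℂ) * Complex.I * ((M : ℤ) * k : ℤ) / M = (k : ℂ) * (2 * Real.pi * Complex.I) := by
    push_cast; field_simp
  rw [this, Complex.exp_int_mul_two_pi_mul_I]

lemma eps_congr {M : ℕ} [NeZero M] {a b : ℤ} (h : a ≡ b [ZMOD (M : ℤ)]) : eps M a = eps M b := by
  obtain ⟨k, hk⟩ := h.dvd
  have : a = b + M * (-k) := by rw [mul_neg]; omega
  rw [this, eps_add, eps_mul_self, mul_one]

lemma eps_ne_one {M : ℕ} [NeZero M] {a : ℤ} (h : ¬ (M : ℤ) ∣ a) : eps M a ≠ 1 := by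
  intro hone
  rw [eps, Complex.exp_eq_one_iff] at hone
  obtain ⟨n, hn⟩ := hone
  apply h
  refine ⟨n, ?_⟩
  have hM : (M : ℂ) ≠ 0 := Nat.cast_ne_zero.mpr (NeZero.ne M)
  have h2 : (2 * (Real.pi : ℂ) * Complex.I) ≠ 0 := by
    simp [Real.pi_ne_zero, Complex.I_ne_zero]
  have h3 : (2 * (Real.pi : ℂ) * Complex.I) * ((a : ℂ) / M) = (2 * (Real.pi : ℂ) * Complex.I) * n := by
    rw [mul_div_assoc] at hn; rw [hn]; ring
  have h4 := mul_left_cancel₀ h2 h3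
  have h5 : (a : ℂ) = (M : ℂ) * n := by
    field_simp at h4; rw [h4]
  exact_mod_cast h5

lemma eps_nat_pow (M : ℕ) (k : ℕ) (a : ℤ) : eps M ((k : ℤ) * a) = eps M a ^ k := by
  rw [eps, eps, ← Complex.exp_nat_mul]; congr 1; push_cast; ring

lemma sum_zmod_val {M : ℕ} [NeZero M] (F : ℕ → ℂ) :
    ∑ u : ZMod M, F u.val = ∑ k ∈ Finset.range M, F k := by
  apply Finset.sum_nbij' (i := fun (u : ZMod M) => u.val) (j := fun k => (k : ZMod M))
  · intro a _; exact Finset.mem_range.mpr a.val_lt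
  · intro a _; exact Finset.mem_univ _
  · intro a _; simp [ZMod.natCast_val, ZMod.cast_id]
  · intro a ha; exact ZMod.val_cast_of_lt (Finset.mem_range.mp ha)
  · intro a _; rfl

lemma eps_orth (M : ℕ) [NeZero M] (a : ℤ) :
    ∑ u : ZMod M, eps M ((u.val : ℤ) * a) = if (M : ℤ) ∣ a then (M : ℂ) else 0 := by
  have h1 : ∑ u : ZMod M, eps M ((u.val : ℤ) * a) = ∑ k ∈ Finset.range M, eps M a ^ k := by
    rw [← sum_zmod_val (fun k => eps M a ^ k)]
    exact Finset.sum_congr rfl fun u _ => eps_nat_pow M u.val a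
  rw [h1]
  split_ifs with hd
  · obtain ⟨k, hk⟩ := hd
    have : eps M a = 1 := by rw [hk]; exact eps_mul_self M k
    simp [this]
  · rw [geom_sum_eq (eps_ne_one hd)]
    have : eps M a ^ M = 1 := by
      rw [← eps_nat_pow]; exact eps_mul_self M a
    rw [this]; simp

-- helper: cast equality to ModEq
lemma zmod_modeq {M : ℕ} [NeZero M] (x : ZMod M) (a : ℤ) (hx : ((a : ℤ) : ZMod M) = x) :
    ((x.val : ℤ)) ≡ a [ZMOD (M : ℤ)] := by
  rw [← ZMod.intCast_eq_intCast_iff]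
  push_cast
  rw [ZMod.natCast_val, ZMod.cast_id, hx]

lemma dft2_eq {M N : ℕ} [NeZero M] [NeZero N] (z : ZMod M × ZMod N → ℂ) (u : ZMod M) (v : ZMod N) :
    dft2 z u v = ∑ m : ZMod M, ∑ n : ZMod N,
      z (m, n) * eps M (-((u.val : ℤ) * m.val)) * eps N (-((v.val : ℤ) * n.val)) := by
  unfold dft2
  refine Finset.sum_congr rfl fun m _ => Finset.sum_congr rfl fun n _ => ?_
  rw [eps, eps]
  congr 2
  · congr 1; push_cast; ring
  · congr 1; push_cast; ring

lemma zmod_dvd_iff_eq {M : ℕ} [NeZero M] (x y : ZMod M) :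
    (M : ℤ) ∣ ((x.val : ℤ) - y.val) ↔ y = x := by
  rw [← Int.modEq_iff_dvd, ← ZMod.intCast_eq_intCast_iff]
  push_cast
  rw [ZMod.natCast_val, ZMod.cast_id, ZMod.natCast_val, ZMod.cast_id]

lemma factor_sum {M N : ℕ} [NeZero M] [NeZero N] (c : ℂ) (A : ZMod M → ℂ) (B : ZMod N → ℂ) :
    ∑ u : ZMod M, ∑ v : ZMod N, c * A u * B v = c * (∑ u, A u) * (∑ v, B v) := by
  calc ∑ u : ZMod M, ∑ v : ZMod N, c * A u * B v
      = ∑ u : ZMod M, (c * A u) * (∑ v : ZMod N, B v) := by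
        exact Finset.sum_congr rfl fun u _ => (Finset.mul_sum _ _ _).symm
    _ = (∑ u : ZMod M, c * A u) * (∑ v : ZMod N, B v) := (Finset.sum_mul _ _ _).symm
    _ = c * (∑ u, A u) * (∑ v, B v) := by rw [← Finset.mul_sum]

lemma sum_swap4 {α β γ δ : Type*} [Fintype α] [Fintype β] [Fintype γ] [Fintype δ]
    (F : α → β → γ → δ → ℂ) :
    ∑ a : α, ∑ b : β, ∑ c : γ, ∑ d : δ, F a b c d
      = ∑ c : γ, ∑ d : δ, ∑ a : α, ∑ b : β, F a b c d := by
  calc ∑ a : α, ∑ b : β, ∑ c : γ, ∑ d : δ, F a b c d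
      = ∑ a : α, ∑ c : γ, ∑ b : β, ∑ d : δ, F a b c d := by
        exact Finset.sum_congr rfl fun a _ => Finset.sum_comm
    _ = ∑ c : γ, ∑ a : α, ∑ b : β, ∑ d : δ, F a b c d := Finset.sum_comm
    _ = ∑ c : γ, ∑ a : α, ∑ d : δ, ∑ b : β, F a b c d := by
        exact Finset.sum_congr rfl fun c _ => Finset.sum_congr rfl fun a _ => Finset.sum_comm
    _ = ∑ c : γ, ∑ d : δ, ∑ a : α, ∑ b : β, F a b c d := by
        exact Finset.sum_congr rfl fun c _ => Finset.sum_comm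

lemma dft2_inv {M N : ℕ} [NeZero M] [NeZero N] (z : ZMod M × ZMod N → ℂ) (m : ZMod M) (n : ZMod N) :
    ∑ u : ZMod M, ∑ v : ZMod N, dft2 z u v * eps M ((u.val : ℤ) * m.val) * eps N ((v.val : ℤ) * n.val)
      = (M : ℂ) * N * z (m, n) := by
  have step1 : ∀ (u : ZMod M) (v : ZMod N),
      dft2 z u v * eps M ((u.val : ℤ) * m.val) * eps N ((v.val : ℤ) * n.val)
        = ∑ p : ZMod M, ∑ q : ZMod N,
            eps M ((u.val : ℤ) * ((m.val : ℤ) - p.val)) * eps N ((v.val : ℤ) * ((n.val : ℤ) - q.val)) * z (p, q) := by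
    intro u v
    rw [dft2_eq]
    simp only [Finset.sum_mul]
    refine Finset.sum_congr rfl fun p _ => Finset.sum_congr rfl fun q _ => ?_
    have e1 : eps M (-((u.val : ℤ) * p.val)) * eps M ((u.val : ℤ) * m.val)
        = eps M ((u.val : ℤ) * ((m.val : ℤ) - p.val)) := by
      rw [← eps_add]; congr 1; ring
    have e2 : eps N (-((v.val : ℤ) * q.val)) * eps N ((v.val : ℤ) * n.val)
        = eps N ((v.val : ℤ) * ((n.val : ℤ) - q.val)) := by
      rw [← eps_add]; congr 1; ring
    rw [← e1, ← e2]; ring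
  calc ∑ u : ZMod M, ∑ v : ZMod N, dft2 z u v * eps M ((u.val : ℤ) * m.val) * eps N ((v.val : ℤ) * n.val)
      = ∑ u : ZMod M, ∑ v : ZMod N, ∑ p : ZMod M, ∑ q : ZMod N,
          eps M ((u.val : ℤ) * ((m.val : ℤ) - p.val)) * eps N ((v.val : ℤ) * ((n.val : ℤ) - q.val)) * z (p, q) := by
        exact Finset.sum_congr rfl fun u _ => Finset.sum_congr rfl fun v _ => step1 u v
    _ = ∑ p : ZMod M, ∑ q : ZMod N, ∑ u : ZMod M, ∑ v : ZMod N,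
          z (p, q) * eps M ((u.val : ℤ) * ((m.val : ℤ) - p.val)) * eps N ((v.val : ℤ) * ((n.val : ℤ) - q.val)) := by
        rw [sum_swap4]
        exact Finset.sum_congr rfl fun p _ => Finset.sum_congr rfl fun q _ =>
          Finset.sum_congr rfl fun u _ => Finset.sum_congr rfl fun v _ => by ring
    _ = ∑ p : ZMod M, ∑ q : ZMod N, z (p, q)
          * (if (M : ℤ) ∣ ((m.val : ℤ) - p.val) then (M : ℂ) else 0)
          * (if (N : ℤ) ∣ ((n.val : ℤ) - q.val) then (N : ℂ) else 0) := by
        refine Finset.sum_congr rfl fun p _ => Finset.sum_congr rfl fun q _ => ?_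
        rw [factor_sum, eps_orth, eps_orth]
    _ = (M : ℂ) * N * z (m, n) := by
        have hrw : ∀ (p : ZMod M) (q : ZMod N),
            z (p, q) * (if (M : ℤ) ∣ ((m.val : ℤ) - p.val) then (M : ℂ) else 0)
              * (if (N : ℤ) ∣ ((n.val : ℤ) - q.val) then (N : ℂ) else 0)
            = if p = m then (if q = n then (M : ℂ) * N * z (m, n) else 0) else 0 := by
          intro p q
          simp only [zmod_dvd_iff_eq]
          split_ifs with h1 h2 <;> simp_all <;> ring
        simp only [hrw]
        simp

lemma sum_zmod_restrict {M J : ℕ} [NeZero M] (hJM : J ≤ M) (G : ZMod M → ℂ)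
    (hG : ∀ p : ZMod M, J ≤ p.val → G p = 0) :
    ∑ p : ZMod M, G p = ∑ i : Fin J, G ((i.val : ℕ) : ZMod M) := by
  classical
  have hinj : ∀ a ∈ (Finset.univ : Finset (Fin J)), ∀ b ∈ Finset.univ,
      ((a.val : ℕ) : ZMod M) = ((b.val : ℕ) : ZMod M) → a = b := by
    intro a _ b _ hab
    have h1 := ZMod.val_cast_of_lt (lt_of_lt_of_le a.isLt hJM)
    have h2 := ZMod.val_cast_of_lt (lt_of_lt_of_le b.isLt hJM)
    exact Fin.ext (by rw [← h1, ← h2, hab])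
  rw [show (∑ i : Fin J, G ((i.val : ℕ) : ZMod M))
      = ∑ p ∈ (Finset.univ : Finset (Fin J)).image (fun i : Fin J => ((i.val : ℕ) : ZMod M)), G p from
    (Finset.sum_image hinj).symm]
  refine (Finset.sum_subset (Finset.subset_univ _) ?_).symm
  intro x _ hx
  apply hG
  by_contra hlt
  push_neg at hlt
  exact hx (Finset.mem_image.mpr ⟨⟨x.val, hlt⟩, Finset.mem_univ _, by
    simp [ZMod.natCast_val, ZMod.cast_id]⟩)

lemma val_add_modeq {M : ℕ} [NeZero M] (x y : ZMod M) :
    (((x + y).val : ℤ)) ≡ (x.val : ℤ) + y.val [ZMOD (M : ℤ)] :=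
  zmod_modeq (x + y) ((x.val : ℤ) + y.val) (by push_cast [ZMod.natCast_val, ZMod.cast_id]; ring)

lemma eps_shift {M : ℕ} [NeZero M] (u m c : ZMod M) :
    eps M (-((u.val : ℤ) * m.val)) = eps M (-((u.val : ℤ) * (m + c).val)) * eps M ((u.val : ℤ) * c.val) := by
  rw [← eps_add]
  apply eps_congr
  have h := (val_add_modeq m c).mul_left ((u.val : ℤ))
  have h2 := (h.neg.add_right ((u.val : ℤ) * c.val)).symm
  have h3 : -((u.val : ℤ) * ((m.val : ℤ) + c.val)) + (u.val : ℤ) * c.val = -((u.val : ℤ) * m.val) := by ring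
  rw [h3] at h2
  exact h2

lemma shift_sum {M N : ℕ} [NeZero M] [NeZero N] (f : ZMod M × ZMod N → ℂ)
    (u : ZMod M) (v : ZMod N) (c : ZMod M) (d : ZMod N) :
    ∑ m : ZMod M, ∑ n : ZMod N, f (m + c, n + d) * eps M (-((u.val : ℤ) * m.val)) * eps N (-((v.val : ℤ) * n.val))
      = (∑ m : ZMod M, ∑ n : ZMod N, f (m, n) * eps M (-((u.val : ℤ) * m.val)) * eps N (-((v.val : ℤ) * n.val)))
        * eps M ((u.val : ℤ) * c.val) * eps N ((v.val : ℤ) * d.val) := by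
  simp only [Finset.sum_mul]
  refine Fintype.sum_equiv (Equiv.addRight c) _ _ fun m => ?_
  refine Fintype.sum_equiv (Equiv.addRight d) _ _ fun n => ?_
  simp only [Equiv.coe_addRight]
  rw [eps_shift u m c, eps_shift v n d]
  ring

/-- With `s = (J−1)/2`, `t = (K−1)/2`, coordinate-reversed PSF
`h'(i,j) = h(J−1−i, K−1−j)` with extended form `h'_e` and 2-D DFT `Ĥ'`, if
`Ĝ(u,v) = F̂(u,v)·Ĥ'(u,v)·exp(2πi·v·t/N)·exp(2πi·u·s/M)` for all `(u,v)`, then the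
spatial-domain convolution satisfies the symmetric property with the original PSF:
`g(m,n) = Σ_i Σ_j h(i,j)·f(m−s+i, n−t+j)`. -/
theorem modified_frequency_formula_2d_original_psf
    (M N J K : ℕ) [NeZero M] [NeZero N]
    (hJodd : Odd J) (hKodd : Odd K) (hJM : J < M) (hKN : K < N)
    (f : ZMod M × ZMod N → ℂ) (h : Fin J × Fin K → ℂ)
    (h' : Fin J × Fin K → ℂ)
    (hh' : ∀ (i : Fin J) (j : Fin K),
      h' (i, j) = h (⟨J - 1 - i.val, by rcases hJodd with ⟨c, hc⟩; have := i.isLt; omega⟩,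
                     ⟨K - 1 - j.val, by rcases hKodd with ⟨c, hc⟩; have := j.isLt; omega⟩))
    (he' : ZMod M × ZMod N → ℂ)
    (hhe' : ∀ (m : ZMod M) (n : ZMod N),
      he' (m, n) = if hmn : m.val < J ∧ n.val < K
        then h' (⟨m.val, hmn.1⟩, ⟨n.val, hmn.2⟩) else 0)
    (s t : ℕ) (hs : s = (J - 1) / 2) (ht : t = (K - 1) / 2)
    (g : ZMod M × ZMod N → ℂ)
    (hfreq : ∀ (u : ZMod M) (v : ZMod N),
      dft2 g u v = dft2 f u v * dft2 he' u v *
        Complex.exp (2 * Real.pi * Complex.I * (v.val : ℂ) * (t : ℂ) / (N : ℂ)) *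
        Complex.exp (2 * Real.pi * Complex.I * (u.val : ℂ) * (s : ℂ) / (M : ℂ))) :
    ∀ (m : ZMod M) (n : ZMod N),
      g (m, n) = ∑ i : Fin J, ∑ j : Fin K,
        h (i, j) * f (m - (s : ZMod M) + ((i.val : ℕ) : ZMod M),
                      n - (t : ZMod N) + ((j.val : ℕ) : ZMod N)) := by
  have hJ : J = 2 * s + 1 := by rcases hJodd with ⟨c, hc⟩; omega
  have hK : K = 2 * t + 1 := by rcases hKodd with ⟨c, hc⟩; omega
  set F : ZMod M × ZMod N → ℂ := fun p => ∑ i : Fin J, ∑ j : Fin K,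
    h (i, j) * f (p.1 - (s : ZMod M) + ((i.val : ℕ) : ZMod M),
                  p.2 - (t : ZMod N) + ((j.val : ℕ) : ZMod N)) with hF
  have hkey : ∀ (u : ZMod M) (v : ZMod N), dft2 g u v = dft2 F u v := by
    intro u v
    rw [hfreq u v]
    -- the common "T" expression
    set T : ℂ := ∑ i : Fin J, ∑ j : Fin K,
      h (i, j) * eps M ((u.val : ℤ) * ((i.val : ℤ) - s)) * eps N ((v.val : ℤ) * ((j.val : ℤ) - t)) with hT
    have hexpv : Complex.exp (2 * Real.pi * Complex.I * (v.val : ℂ) * (t : ℂ) / (N : ℂ))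
        = eps N ((v.val : ℤ) * t) := by rw [eps]; congr 1; push_cast; ring
    have hexpu : Complex.exp (2 * Real.pi * Complex.I * (u.val : ℂ) * (s : ℂ) / (M : ℂ))
        = eps M ((u.val : ℤ) * s) := by rw [eps]; congr 1; push_cast; ring
    have hdhe : dft2 he' u v = ∑ i : Fin J, ∑ j : Fin K,
        h (i.rev, j.rev) * eps M (-((u.val : ℤ) * i.val)) * eps N (-((v.val : ℤ) * j.val)) := by
      calc dft2 he' u v
          = ∑ m : ZMod M, ∑ n : ZMod N,
              he' (m, n) * eps M (-((u.val : ℤ) * m.val)) * eps N (-((v.val : ℤ) * n.val)) :=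
            dft2_eq he' u v
        _ = ∑ i : Fin J, ∑ n : ZMod N,
              he' (((i.val : ℕ) : ZMod M), n) * eps M (-((u.val : ℤ) * (((i.val : ℕ) : ZMod M)).val))
                * eps N (-((v.val : ℤ) * n.val)) := by
            refine sum_zmod_restrict hJM.le _ fun p hp => Finset.sum_eq_zero fun n _ => ?_
            rw [hhe', dif_neg (fun hc => absurd hc.1 (not_lt.mpr hp))]
            simp
        _ = ∑ i : Fin J, ∑ j : Fin K,
              he' (((i.val : ℕ) : ZMod M), ((j.val : ℕ) : ZMod N))
                * eps M (-((u.val : ℤ) * (((i.val : ℕ) : ZMod M)).val))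
                * eps N (-((v.val : ℤ) * (((j.val : ℕ) : ZMod N)).val)) := by
            refine Finset.sum_congr rfl fun i _ => ?_
            refine sum_zmod_restrict hKN.le _ fun q hq => ?_
            rw [hhe', dif_neg (fun hc => absurd hc.2 (not_lt.mpr hq))]
            simp
        _ = ∑ i : Fin J, ∑ j : Fin K,
              h (i.rev, j.rev) * eps M (-((u.val : ℤ) * i.val)) * eps N (-((v.val : ℤ) * j.val)) := by
            refine Finset.sum_congr rfl fun i _ => Finset.sum_congr rfl fun j _ => ?_
            have hv1 : (((i.val : ℕ) : ZMod M)).val = i.val := ZMod.val_cast_of_lt (i.isLt.trans hJM)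
            have hv2 : (((j.val : ℕ) : ZMod N)).val = j.val := ZMod.val_cast_of_lt (j.isLt.trans hKN)
            rw [hhe', dif_pos (by rw [hv1, hv2]; exact ⟨i.isLt, j.isLt⟩ : (((i.val : ℕ) : ZMod M)).val < J ∧ (((j.val : ℕ) : ZMod N)).val < K)]
            have hhval : h' (⟨(((i.val : ℕ) : ZMod M)).val, by rw [hv1]; exact i.isLt⟩,
                ⟨(((j.val : ℕ) : ZMod N)).val, by rw [hv2]; exact j.isLt⟩) = h (i.rev, j.rev) := by
              rw [hh']
              refine congrArg h (Prod.ext ?_ ?_)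
              · apply Fin.ext
                show J - 1 - (((i.val : ℕ) : ZMod M)).val = i.rev.val
                rw [hv1, Fin.val_rev]
                omega
              · apply Fin.ext
                show K - 1 - (((j.val : ℕ) : ZMod N)).val = j.rev.val
                rw [hv2, Fin.val_rev]
                omega
            rw [hhval, hv1, hv2]
    have hA1 : dft2 he' u v
        * Complex.exp (2 * Real.pi * Complex.I * (v.val : ℂ) * (t : ℂ) / (N : ℂ))
        * Complex.exp (2 * Real.pi * Complex.I * (u.val : ℂ) * (s : ℂ) / (M : ℂ)) = T := by
      rw [hexpv, hexpu, hdhe]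
      -- reindex by rev
      have hre : ∑ i : Fin J, ∑ j : Fin K,
          h (i.rev, j.rev) * eps M (-((u.val : ℤ) * i.val)) * eps N (-((v.val : ℤ) * j.val))
          = ∑ i : Fin J, ∑ j : Fin K,
          h (i, j) * eps M (-((u.val : ℤ) * i.rev.val)) * eps N (-((v.val : ℤ) * j.rev.val)) := by
        refine Fintype.sum_equiv Fin.revPerm _ _ fun i => ?_
        refine Fintype.sum_equiv Fin.revPerm _ _ fun j => ?_
        simp [Fin.rev_rev]
      rw [hre, hT]
      simp only [Finset.sum_mul]
      refine Finset.sum_congr rfl fun i _ => Finset.sum_congr rfl fun j _ => ?_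
      have hri : (i.rev.val : ℤ) = 2 * s - i.val := by
        have h1 := Fin.val_rev i
        have h2 := i.isLt
        omega
      have hrj : (j.rev.val : ℤ) = 2 * t - j.val := by
        have h1 := Fin.val_rev j
        have h2 := j.isLt
        omega
      have e1 : eps M (-((u.val : ℤ) * i.rev.val)) * eps M ((u.val : ℤ) * s)
          = eps M ((u.val : ℤ) * ((i.val : ℤ) - s)) := by
        rw [← eps_add]; congr 1; rw [hri]; ring
      have e2 : eps N (-((v.val : ℤ) * j.rev.val)) * eps N ((v.val : ℤ) * t)
          = eps N ((v.val : ℤ) * ((j.val : ℤ) - t)) := by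
        rw [← eps_add]; congr 1; rw [hrj]; ring
      rw [← e1, ← e2]; ring
    have hA2 : dft2 F u v = dft2 f u v * T := by
      rw [dft2_eq F u v]
      have expand : ∑ m : ZMod M, ∑ n : ZMod N,
          F (m, n) * eps M (-((u.val : ℤ) * m.val)) * eps N (-((v.val : ℤ) * n.val))
          = ∑ i : Fin J, ∑ j : Fin K, ∑ m : ZMod M, ∑ n : ZMod N,
            h (i, j) * f (m + (((i.val : ℕ) : ZMod M) - s), n + (((j.val : ℕ) : ZMod N) - t))
              * eps M (-((u.val : ℤ) * m.val)) * eps N (-((v.val : ℤ) * n.val)) := by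
        rw [← sum_swap4]
        refine Finset.sum_congr rfl fun m _ => Finset.sum_congr rfl fun n _ => ?_
        rw [hF]
        simp only [Finset.sum_mul]
        refine Finset.sum_congr rfl fun i _ => Finset.sum_congr rfl fun j _ => ?_
        have : (m, n).1 - (s : ZMod M) + ((i.val : ℕ) : ZMod M) = m + (((i.val : ℕ) : ZMod M) - s) := by
          ring
        have h2 : (m, n).2 - (t : ZMod N) + ((j.val : ℕ) : ZMod N) = n + (((j.val : ℕ) : ZMod N) - t) := by
          ring
        rw [this, h2]
      rw [expand]
      have inner : ∀ (i : Fin J) (j : Fin K),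
          ∑ m : ZMod M, ∑ n : ZMod N,
            h (i, j) * f (m + (((i.val : ℕ) : ZMod M) - s), n + (((j.val : ℕ) : ZMod N) - t))
              * eps M (-((u.val : ℤ) * m.val)) * eps N (-((v.val : ℤ) * n.val))
          = dft2 f u v * (h (i, j) * eps M ((u.val : ℤ) * ((i.val : ℤ) - s)) * eps N ((v.val : ℤ) * ((j.val : ℤ) - t))) := by
        intro i j
        have hpull : ∑ m : ZMod M, ∑ n : ZMod N,
            h (i, j) * f (m + (((i.val : ℕ) : ZMod M) - s), n + (((j.val : ℕ) : ZMod N) - t))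
              * eps M (-((u.val : ℤ) * m.val)) * eps N (-((v.val : ℤ) * n.val))
            = h (i, j) * ∑ m : ZMod M, ∑ n : ZMod N,
              f (m + (((i.val : ℕ) : ZMod M) - s), n + (((j.val : ℕ) : ZMod N) - t))
                * eps M (-((u.val : ℤ) * m.val)) * eps N (-((v.val : ℤ) * n.val)) := by
          rw [Finset.mul_sum]
          refine Finset.sum_congr rfl fun m _ => ?_
          rw [Finset.mul_sum]
          exact Finset.sum_congr rfl fun n _ => by ring
        rw [hpull, shift_sum f u v (((i.val : ℕ) : ZMod M) - s) (((j.val : ℕ) : ZMod N) - t)]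
        have ec1 : eps M ((u.val : ℤ) * ((((i.val : ℕ) : ZMod M) - s)).val)
            = eps M ((u.val : ℤ) * ((i.val : ℤ) - s)) := by
          apply eps_congr
          refine Int.ModEq.mul_left _ ?_
          apply zmod_modeq
          push_cast [ZMod.natCast_val, ZMod.cast_id]
          try ring
        have ec2 : eps N ((v.val : ℤ) * ((((j.val : ℕ) : ZMod N) - t)).val)
            = eps N ((v.val : ℤ) * ((j.val : ℤ) - t)) := by
          apply eps_congr
          refine Int.ModEq.mul_left _ ?_
          apply zmod_modeq
          push_cast [ZMod.natCast_val, ZMod.cast_id]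
          try ring
        rw [ec1, ec2, ← dft2_eq f u v]
        ring
      rw [Finset.sum_congr rfl fun i _ => Finset.sum_congr rfl fun j _ => inner i j]
      rw [hT]
      rw [Finset.mul_sum]
      refine Finset.sum_congr rfl fun i _ => ?_
      rw [Finset.mul_sum]
    calc dft2 f u v * dft2 he' u v
          * Complex.exp (2 * Real.pi * Complex.I * (v.val : ℂ) * (t : ℂ) / (N : ℂ))
          * Complex.exp (2 * Real.pi * Complex.I * (u.val : ℂ) * (s : ℂ) / (M : ℂ))
        = dft2 f u v * (dft2 he' u v
          * Complex.exp (2 * Real.pi * Complex.I * (v.val : ℂ) * (t : ℂ) / (N : ℂ))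
          * Complex.exp (2 * Real.pi * Complex.I * (u.val : ℂ) * (s : ℂ) / (M : ℂ))) := by ring
      _ = dft2 f u v * T := by rw [hA1]
      _ = dft2 F u v := hA2.symm
  intro m n
  have hMN : ((M : ℂ) * N) ≠ 0 :=
    mul_ne_zero (Nat.cast_ne_zero.mpr (NeZero.ne M)) (Nat.cast_ne_zero.mpr (NeZero.ne N))
  have h1 : (M : ℂ) * N * g (m, n) = (M : ℂ) * N * F (m, n) := by
    rw [← dft2_inv g m n, ← dft2_inv F m n]
    exact Finset.sum_congr rfl fun u _ => Finset.sum_congr rfl fun v _ => by rw [hkey u v]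
  show g (m, n) = F (m, n)
  exact mul_left_cancel₀ hMN h1
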